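/- Let g, h : ℝ^d → [0,1]^c with α ∈ [1/2, 1] and mixed probabilities p_i(x) = (1-α)·g_i(x) + α·h_i(x). Suppose each component h_i is ℓ_p-Lipschitz with constant L_i. Fix x ∈ ℝ^d with y = argmax_i h_i(x), and define r = min_{i ≠ y} [α(h_y(x) - h_i(x)) + α - 1] / [α(L_y + L_i)]. Then for every δ with ‖δ‖_p ≤ r, argmax_i p_i(x+δ) = y. -/

import Mathlib

/-- Lipschitz-based certified radius of the mixed classifier
(Theorem 3.6 in the paper). `r` is the minimum over `i ≠ y` of
`[α(h_y(x) - h_i(x)) + α - 1] / [α(L_y + L_i)]`, encoded by the lower bound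
hypothesis `hrmin`. -/
theorem mixed_classifier_lipschitz_certified_radius
    (d c : ℕ) (g h : (Fin d → ℝ) → Fin c → ℝ)
    (nrm : (Fin d → ℝ) → ℝ)  -- the ℓ_p norm
    (hg01 : ∀ x i, g x i ∈ Set.Icc (0:ℝ) 1)
    (hh01 : ∀ x i, h x i ∈ Set.Icc (0:ℝ) 1)
    (α : ℝ) (hα : α ∈ Set.Icc (1/2 : ℝ) 1)
    (L : Fin c → ℝ) (hLpos : ∀ i, 0 < L i)
    (hLip : ∀ i, ∀ x x' : Fin d → ℝ, |h x' i - h x i| ≤ L i * nrm (x' - x))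
    (x : Fin d → ℝ) (y : Fin c) (hy : ∀ i, h x i ≤ h x y)
    (r : ℝ)
    (hrmin : ∀ i, i ≠ y →
      r ≤ (α * (h x y - h x i) + α - 1) / (α * (L y + L i))) :
    ∀ δ : Fin d → ℝ, nrm δ ≤ r → ∀ i,
      (1 - α) * g (x + δ) i + α * h (x + δ) i ≤
        (1 - α) * g (x + δ) y + α * h (x + δ) y := by
  intro δ hδ i
  rcases eq_or_ne i y with rfl | hne
  · exact le_refl _
  have hα0 : (0:ℝ) < α := by linarith [hα.1]
  have hD : 0 < α * (L y + L i) := by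
    have := hLpos y; have := hLpos i; positivity
  have hsub : (x + δ) - x = δ := by abel
  have h1 := hLip i x (x + δ)
  have h2 := hLip y x (x + δ)
  rw [hsub] at h1 h2
  rw [abs_le] at h1 h2
  have key : α * (L y + L i) * nrm δ ≤ α * (h x y - h x i) + α - 1 := by
    have hr := hrmin i hne
    have : nrm δ ≤ (α * (h x y - h x i) + α - 1) / (α * (L y + L i)) :=
      le_trans hδ hr
    calc α * (L y + L i) * nrm δ
        ≤ α * (L y + L i) * ((α * (h x y - h x i) + α - 1) / (α * (L y + L i))) :=
          mul_le_mul_of_nonneg_left this hD.le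
      _ = α * (h x y - h x i) + α - 1 := by field_simp [hD.ne', (ne_of_gt (by linarith [hLpos y, hLpos i]) : L y + L i ≠ 0)]
  have hgi := hg01 (x + δ) i
  have hgy := hg01 (x + δ) y
  nlinarith [h1.1, h1.2, h2.1, h2.2, hgi.1, hgi.2, hgy.1, hgy.2, hα.1, hα.2,
    mul_le_mul_of_nonneg_left h1.2 hα0.le, mul_le_mul_of_nonneg_left h2.1 hα0.le]
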